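/- (Conditional regret-capacity theorem for the α-regret.) Fix α > 1 and suppose there exists a prior probability measure w* on Θ with I_α^{w*}(θ,Y|X^n) = sup_w I_α^w(θ,Y|X^n), the supremum being over all prior probability measures w on Θ. Then the minimax batch α-regret satisfies min over batch predictors p̂ of sup_{θ∈Θ} R_α(p̂,θ) = I_α^{w*}(θ,Y|X^n), and the minimum is achieved by the conditional α-NML predictor p̂*_α(y|x^n) = ( ∫_Θ p_θ(y)^α w*(dθ|x^n) )^{1/α} / Σ_{y'} ( ∫_Θ p_θ(y')^α w*(dθ|x^n) )^{1/α}, where w*(dθ|x^n) = w*(dθ) p_θ(x^n)/∫_Θ p_{θ'}(x^n) w*(dθ') is the posterior of w* given x^n. -/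

import Mathlib

open MeasureTheory Real Filter Topology

/-- `q` is a probability mass function on the finite type `B`. -/
def IsPMF {B : Type*} [Fintype B] (q : B → ℝ) : Prop :=
  (∀ y, 0 ≤ q y) ∧ ∑ y, q y = 1

/-- Probability of a tuple of `n` i.i.d. batches: `p_θ(x^n) = ∏ i, p_θ(x_i)`. -/
def prodP {Θ B : Type*} (p : Θ → B → ℝ) (n : ℕ) (θ : Θ) (x : Fin n → B) : ℝ :=
  ∏ i, p θ (x i)

/-- The batch `α`-regret
`R_α(p̂,θ) = (1/(α-1)) log ( Σ_{x^n} p_θ(x^n) Σ_y p_θ(y) (p_θ(y)/p̂(y|x^n))^(α-1) )`. -/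
noncomputable def alphaRegret {Θ B : Type*} [Fintype B] (α : ℝ) (p : Θ → B → ℝ) (n : ℕ)
    (phat : (Fin n → B) → B → ℝ) (θ : Θ) : ℝ :=
  (α - 1)⁻¹ * Real.log (∑ x : Fin n → B, prodP p n θ x *
    ∑ y : B, p θ y * (p θ y / phat x y) ^ (α - 1))

/-- The conditional Rényi divergence `D_α(Y ‖ Ŷ | θ, X^n)` under the joint law
`w(dθ) p_θ(x^n) p_θ(y)`. -/
noncomputable def condRenyiDiv {Θ B : Type*} [MeasurableSpace Θ] [Fintype B] (α : ℝ)
    (p : Θ → B → ℝ) (n : ℕ) (w : Measure Θ) (phat : (Fin n → B) → B → ℝ) : ℝ :=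
  (α - 1)⁻¹ * Real.log (∫ θ, (∑ x : Fin n → B, prodP p n θ x *
    ∑ y : B, p θ y * (p θ y / phat x y) ^ (α - 1)) ∂w)

/-- The conditional Sibson mutual information
`I_α^w(θ,Y|X^n) = (1/(α-1)) log Σ_{x^n} { Σ_y ( ∫ p_θ(x^n) p_θ(y)^α w(dθ) )^(1/α) }^α`. -/
noncomputable def sibsonMI {Θ B : Type*} [MeasurableSpace Θ] [Fintype B] (α : ℝ)
    (p : Θ → B → ℝ) (n : ℕ) (w : Measure Θ) : ℝ :=
  (α - 1)⁻¹ * Real.log (∑ x : Fin n → B,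
    (∑ y : B, (∫ θ, prodP p n θ x * p θ y ^ α ∂w) ^ α⁻¹) ^ α)

/-- Integral of `g` against the posterior `w(dθ|x^n) = w(dθ) p_θ(x^n) / ∫ p_θ'(x^n) w(dθ')`. -/
noncomputable def posteriorInt {Θ B : Type*} [MeasurableSpace Θ] (p : Θ → B → ℝ) (n : ℕ)
    (w : Measure Θ) (x : Fin n → B) (g : Θ → ℝ) : ℝ :=
  (∫ θ, prodP p n θ x * g θ ∂w) / (∫ θ, prodP p n θ x ∂w)

/-- The conditional `α`-NML predictor
`p̂_α(y|x^n) = ( ∫ p_θ(y)^α w(dθ|x^n) )^(1/α) / Σ_y' ( ∫ p_θ(y')^α w(dθ|x^n) )^(1/α)`. -/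
noncomputable def alphaNML {Θ B : Type*} [MeasurableSpace Θ] [Fintype B] (α : ℝ)
    (p : Θ → B → ℝ) (n : ℕ) (w : Measure Θ) (x : Fin n → B) (y : B) : ℝ :=
  (posteriorInt p n w x fun θ => p θ y ^ α) ^ α⁻¹ /
    ∑ y' : B, (posteriorInt p n w x fun θ => p θ y' ^ α) ^ α⁻¹

set_option linter.unusedSectionVars false
set_option maxHeartbeats 1000000

namespace RCproof

theorem _root_.IsPMF.le_one {B : Type*} [Fintype B] {q : B → ℝ} (h : IsPMF q) (y : B) : q y ≤ 1 := by
  calc q y ≤ ∑ y', q y' := Finset.single_le_sum (fun i _ => h.1 i) (Finset.mem_univ y)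
  _ = 1 := h.2

variable {Θ B : Type*} [MeasurableSpace Θ] [Fintype B]
variable {α : ℝ} {p : Θ → B → ℝ} {n : ℕ} {w : Measure Θ}

theorem prodP_nonneg (hp : ∀ θ, IsPMF (p θ)) (θ : Θ) (x : Fin n → B) :
    0 ≤ prodP p n θ x :=
  Finset.prod_nonneg fun _ _ => (hp θ).1 _

theorem prodP_le_one (hp : ∀ θ, IsPMF (p θ)) (θ : Θ) (x : Fin n → B) :
    prodP p n θ x ≤ 1 :=
  Finset.prod_le_one (fun _ _ => (hp θ).1 _) (fun _ _ => (hp θ).le_one _)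

theorem sum_prodP (hp : ∀ θ, IsPMF (p θ)) (n : ℕ) (θ : Θ) :
    ∑ x : Fin n → B, prodP p n θ x = 1 := by
  classical
  unfold prodP
  rw [← Fintype.piFinset_univ, Finset.sum_prod_piFinset]
  simp [(hp θ).2]

theorem measurable_prodP (hmeas : ∀ z : B, Measurable fun θ => p θ z) (x : Fin n → B) :
    Measurable fun θ => prodP p n θ x := by
  unfold prodP
  exact Finset.measurable_prod _ fun i _ => hmeas (x i)

/-- The "dirac" kernel value `E(x,y) = p_θ(x^n) p_θ(y)^α`. -/
noncomputable def Ef (α : ℝ) (p : Θ → B → ℝ) (n : ℕ) (θ : Θ) (x : Fin n → B) (y : B) : ℝ :=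
  prodP p n θ x * p θ y ^ α

noncomputable def Af (α : ℝ) (p : Θ → B → ℝ) (n : ℕ) (w : Measure Θ) (x : Fin n → B) (y : B) : ℝ :=
  ∫ θ, prodP p n θ x * p θ y ^ α ∂w

noncomputable def Bt (α : ℝ) (p : Θ → B → ℝ) (n : ℕ) (w : Measure Θ) (x : Fin n → B) : ℝ :=
  ∑ y, Af α p n w x y ^ α⁻¹

noncomputable def fC (α : ℝ) (p : Θ → B → ℝ) (n : ℕ) (w : Measure Θ) : ℝ :=
  ∑ x : Fin n → B, Bt α p n w x ^ α

theorem Ef_nonneg (hp : ∀ θ, IsPMF (p θ)) (θ : Θ) (x : Fin n → B) (y : B) :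
    0 ≤ Ef α p n θ x y :=
  mul_nonneg (prodP_nonneg hp θ x) (Real.rpow_nonneg ((hp θ).1 y) α)

theorem Ef_le_one (hα : 0 ≤ α) (hp : ∀ θ, IsPMF (p θ)) (θ : Θ) (x : Fin n → B) (y : B) :
    Ef α p n θ x y ≤ 1 := by
  have h := mul_le_mul (prodP_le_one hp θ x)
    (Real.rpow_le_one ((hp θ).1 y) ((hp θ).le_one y) hα)
    (Real.rpow_nonneg ((hp θ).1 y) α) zero_le_one
  simpa [Ef] using h

theorem measurable_Ef (hα : 0 ≤ α) (hmeas : ∀ z : B, Measurable fun θ => p θ z)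
    (x : Fin n → B) (y : B) :
    Measurable fun θ => Ef α p n θ x y :=
  (measurable_prodP hmeas x).mul
    ((Real.continuous_rpow_const hα).measurable.comp (hmeas y))

theorem integrable_of_bound [IsProbabilityMeasure w] {f : Θ → ℝ} (hf : Measurable f)
    (h0 : ∀ θ, 0 ≤ f θ) (h1 : ∀ θ, f θ ≤ 1) : Integrable f w :=
  (integrable_const 1).mono' hf.aestronglyMeasurable (ae_of_all _ fun θ => by
    rw [Real.norm_eq_abs, abs_of_nonneg (h0 θ)]; exact h1 θ)

theorem integrable_Ef [IsProbabilityMeasure w] (hα : 0 ≤ α) (hp : ∀ θ, IsPMF (p θ))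
    (hmeas : ∀ z : B, Measurable fun θ => p θ z) (x : Fin n → B) (y : B) :
    Integrable (fun θ => Ef α p n θ x y) w :=
  integrable_of_bound (measurable_Ef hα hmeas x y) (fun θ => Ef_nonneg hp θ x y)
    (fun θ => Ef_le_one hα hp θ x y)

theorem integrable_prodP [IsProbabilityMeasure w] (hp : ∀ θ, IsPMF (p θ))
    (hmeas : ∀ z : B, Measurable fun θ => p θ z) (x : Fin n → B) :
    Integrable (fun θ => prodP p n θ x) w :=
  integrable_of_bound (measurable_prodP hmeas x) (fun θ => prodP_nonneg hp θ x)
    (fun θ => prodP_le_one hp θ x)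

theorem Af_nonneg (hp : ∀ θ, IsPMF (p θ)) (x : Fin n → B) (y : B) :
    0 ≤ Af α p n w x y :=
  integral_nonneg fun θ => Ef_nonneg hp θ x y

theorem Bt_nonneg (hp : ∀ θ, IsPMF (p θ)) (x : Fin n → B) :
    0 ≤ Bt α p n w x :=
  Finset.sum_nonneg fun y _ => Real.rpow_nonneg (Af_nonneg hp x y) _

theorem rpow_Af_le_Bt (hp : ∀ θ, IsPMF (p θ)) (x : Fin n → B) (y : B) :
    Af α p n w x y ^ α⁻¹ ≤ Bt α p n w x :=
  Finset.single_le_sum (fun y' _ => Real.rpow_nonneg (Af_nonneg hp x y') _) (Finset.mem_univ y)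

theorem Af_eq_zero (hα : 0 ≤ α) (hp : ∀ θ, IsPMF (p θ))
    (hmeas : ∀ z : B, Measurable fun θ => p θ z) [IsProbabilityMeasure w] {x : Fin n → B}
    (hm : (∫ θ, prodP p n θ x ∂w) = 0) (y : B) : Af α p n w x y = 0 := by
  refine le_antisymm ?_ (Af_nonneg hp x y)
  rw [← hm]
  refine integral_mono (integrable_Ef hα hp hmeas x y) (integrable_prodP hp hmeas x) fun θ => ?_
  have h := Real.rpow_le_one ((hp θ).1 y) ((hp θ).le_one y) hα
  calc prodP p n θ x * p θ y ^ α ≤ prodP p n θ x * 1 :=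
        mul_le_mul_of_nonneg_left h (prodP_nonneg hp θ x)
  _ = prodP p n θ x := mul_one _

theorem div_div_div_same {a b c : ℝ} (hc : c ≠ 0) : a / c / (b / c) = a / b := by
  rcases eq_or_ne b 0 with rfl | hb
  · simp
  · field_simp

/-! ### scalar lemmas -/

theorem term_q (hα : 1 < α) {P q : ℝ} (hP : 0 ≤ P) (hq : 0 ≤ q) :
    P * (P / q) ^ (α - 1) = P ^ α * q ^ (1 - α) := by
  have h1 : α - 1 ≠ 0 := ne_of_gt (by linarith)
  have h2 : (1 : ℝ) - α ≠ 0 := by intro h; apply h1; linarith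
  have hα0 : (0:ℝ) < α := by linarith
  rcases eq_or_lt_of_le hq with h | h
  · rw [← h, div_zero, Real.zero_rpow h1, mul_zero, Real.zero_rpow h2, mul_zero]
  · rcases eq_or_lt_of_le hP with h3 | h3
    · rw [← h3, zero_mul, Real.zero_rpow (ne_of_gt hα0), zero_mul]
    · have hPα : P * P ^ (α - 1) = P ^ α := by
        rw [Real.rpow_sub_one h3.ne']
        field_simp
      have hq1 : q ^ (1 - α) = (q ^ (α - 1))⁻¹ := by
        rw [show (1 - α) = -(α - 1) by ring, Real.rpow_neg h.le]
      rw [Real.div_rpow hP h.le, hq1, ← hPα]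
      ring

theorem rev_holder (hα : 1 < α) (u l : B → ℝ) (hu : ∀ y, 0 ≤ u y) (hl : ∀ y, 0 < l y)
    (hs : ∑ y, l y = 1) :
    (∑ y, u y ^ α⁻¹) ^ α ≤ ∑ y, u y * l y ^ (1 - α) := by
  have hα0 : (0:ℝ) < α := by linarith
  have h := Real.rpow_arith_mean_le_arith_mean_rpow Finset.univ l
    (fun y => u y ^ α⁻¹ / l y) (fun i _ => (hl i).le) hs
    (fun i _ => div_nonneg (Real.rpow_nonneg (hu i) _) (hl i).le) hα.le
  have e1 : ∀ y : B, l y * (u y ^ α⁻¹ / l y) = u y ^ α⁻¹ := fun y => by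
    rw [mul_comm, div_mul_cancel₀ _ (hl y).ne']
  have e2 : ∀ y : B, l y * (u y ^ α⁻¹ / l y) ^ α = u y * l y ^ (1 - α) := fun y => by
    rw [Real.div_rpow (Real.rpow_nonneg (hu y) _) (hl y).le,
      Real.rpow_inv_rpow (hu y) (ne_of_gt hα0),
      show (1 : ℝ) - α = 1 - α by ring, Real.rpow_sub (hl y), Real.rpow_one]
    field_simp
  calc (∑ y, u y ^ α⁻¹) ^ α = (∑ y, l y * (u y ^ α⁻¹ / l y)) ^ α := by
        rw [Finset.sum_congr rfl fun y _ => (e1 y).symm]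
  _ ≤ ∑ y, l y * (u y ^ α⁻¹ / l y) ^ α := h
  _ = ∑ y, u y * l y ^ (1 - α) := Finset.sum_congr rfl fun y _ => e2 y

theorem tangent_concave {r u a : ℝ} (hr0 : 0 < r) (hr1 : r ≤ 1) (ha : 0 ≤ a) (hu : 0 < u) :
    a ^ r ≤ u ^ r + r * (u ^ (r - 1) * (a - u)) := by
  have hs : -1 ≤ a / u - 1 := by
    have : 0 ≤ a / u := div_nonneg ha hu.le
    linarith
  have h := rpow_one_add_le_one_add_mul_self hs hr0.le hr1
  rw [show 1 + (a / u - 1) = a / u by ring] at h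
  have hur : (0:ℝ) < u ^ r := Real.rpow_pos_of_pos hu r
  have key : a ^ r = (a / u) ^ r * u ^ r := by
    rw [Real.div_rpow ha hu.le, div_mul_cancel₀ _ hur.ne']
  rw [key, Real.rpow_sub_one hu.ne']
  calc (a / u) ^ r * u ^ r ≤ (1 + r * (a / u - 1)) * u ^ r :=
        mul_le_mul_of_nonneg_right h hur.le
  _ = u ^ r + r * (u ^ r / u * (a - u)) := by field_simp

theorem tangent_convex (hα : 1 < α) {b s : ℝ} (hb : 0 ≤ b) (hs : 0 ≤ s) :
    b ^ α + α * (b ^ (α - 1) * (s - b)) ≤ s ^ α := by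
  have hα0 : (0:ℝ) < α := by linarith
  have h1 : α - 1 ≠ 0 := ne_of_gt (by linarith)
  rcases eq_or_lt_of_le hb with h | h
  · rw [← h, Real.zero_rpow (ne_of_gt hα0), Real.zero_rpow h1]
    simpa using Real.rpow_nonneg hs α
  · have hs' : -1 ≤ s / b - 1 := by
      have : 0 ≤ s / b := div_nonneg hs h.le
      linarith
    have h2 := one_add_mul_self_le_rpow_one_add hs' hα.le
    rw [show 1 + (s / b - 1) = s / b by ring, Real.div_rpow hs h.le] at h2
    have hbα : (0:ℝ) < b ^ α := Real.rpow_pos_of_pos h α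
    have h3 := mul_le_mul_of_nonneg_right h2 hbα.le
    rw [div_mul_cancel₀ _ hbα.ne'] at h3
    calc b ^ α + α * (b ^ (α - 1) * (s - b))
        = (1 + α * (s / b - 1)) * b ^ α := by
          rw [Real.rpow_sub_one h.ne']; field_simp
    _ ≤ s ^ α := h3

end RCproof

namespace RCproof

variable {Θ B : Type*} [MeasurableSpace Θ] [Fintype B]
variable {α : ℝ} {p : Θ → B → ℝ} {n : ℕ} {w : Measure Θ}

theorem alphaNML_eq [IsProbabilityMeasure w] (hα : 1 < α) (hp : ∀ θ, IsPMF (p θ))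
    (hmeas : ∀ z : B, Measurable fun θ => p θ z) (x : Fin n → B) (y : B) :
    alphaNML α p n w x y = Af α p n w x y ^ α⁻¹ / Bt α p n w x := by
  have hα0 : (0:ℝ) < α := by linarith
  have hm0 : 0 ≤ ∫ θ, prodP p n θ x ∂w := integral_nonneg fun θ => prodP_nonneg hp θ x
  rcases eq_or_lt_of_le hm0 with h | h
  · have hz : ∀ y', Af α p n w x y' = 0 := Af_eq_zero hα0.le hp hmeas h.symm
    have hpost : ∀ y' : B, (posteriorInt p n w x fun θ => p θ y' ^ α) = 0 := fun y' => by
      unfold posteriorInt; rw [← h, div_zero]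
    unfold alphaNML
    simp only [hpost]
    unfold Bt
    simp [hz, Real.zero_rpow (by positivity : α⁻¹ ≠ 0)]
  · have hpost : ∀ y' : B, (posteriorInt p n w x fun θ => p θ y' ^ α)
        = Af α p n w x y' / (∫ θ, prodP p n θ x ∂w) := fun y' => rfl
    unfold alphaNML
    have hrw : ∀ y' : B, (Af α p n w x y' / (∫ θ, prodP p n θ x ∂w)) ^ α⁻¹
        = Af α p n w x y' ^ α⁻¹ / (∫ θ, prodP p n θ x ∂w) ^ α⁻¹ := fun y' =>
      Real.div_rpow (Af_nonneg hp x y') h.le _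
    simp only [hpost, hrw]
    rw [← Finset.sum_div]
    unfold Bt
    exact div_div_div_same (ne_of_gt (Real.rpow_pos_of_pos h _))

theorem alphaNML_nonneg [IsProbabilityMeasure w] (hα : 1 < α) (hp : ∀ θ, IsPMF (p θ))
    (hmeas : ∀ z : B, Measurable fun θ => p θ z) (x : Fin n → B) (y : B) :
    0 ≤ alphaNML α p n w x y := by
  rw [alphaNML_eq hα hp hmeas x y]
  exact div_nonneg (Real.rpow_nonneg (Af_nonneg hp x y) _) (Bt_nonneg hp x)

theorem alphaNML_rpow [IsProbabilityMeasure w] (hα : 1 < α) (hp : ∀ θ, IsPMF (p θ))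
    (hmeas : ∀ z : B, Measurable fun θ => p θ z) (x : Fin n → B) (y : B) :
    alphaNML α p n w x y ^ (1 - α)
      = Af α p n w x y ^ (α⁻¹ - 1) * Bt α p n w x ^ (α - 1) := by
  have hα0 : (0:ℝ) < α := by linarith
  have h1α : (1:ℝ) - α ≠ 0 := by intro h; nlinarith
  have hinv1 : α⁻¹ < 1 := by nlinarith [mul_inv_cancel₀ (ne_of_gt hα0), inv_pos.2 hα0]
  have hinvne : α⁻¹ - 1 ≠ 0 := by intro h; nlinarith
  rw [alphaNML_eq hα hp hmeas x y]
  rcases eq_or_lt_of_le (Af_nonneg hp x y (α := α) (w := w)) with h | h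
  · rw [← h, Real.zero_rpow (by positivity : α⁻¹ ≠ 0), zero_div, Real.zero_rpow h1α,
      Real.zero_rpow hinvne, zero_mul]
  · have hBpos : 0 < Bt α p n w x :=
      lt_of_lt_of_le (Real.rpow_pos_of_pos h α⁻¹) (rpow_Af_le_Bt hp x y)
    rw [Real.div_rpow (Real.rpow_nonneg (Af_nonneg hp x y) _) hBpos.le,
      ← Real.rpow_mul (Af_nonneg hp x y),
      show α⁻¹ * (1 - α) = α⁻¹ - 1 by rw [mul_sub, mul_one, inv_mul_cancel₀ (ne_of_gt hα0)],
      show (1 - α) = -(α - 1) by ring, Real.rpow_neg hBpos.le, div_eq_mul_inv, inv_inv]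

theorem regret_arg_eq (hα : 1 < α) (hp : ∀ θ, IsPMF (p θ)) {phat : (Fin n → B) → B → ℝ}
    (hφ : ∀ x y, 0 ≤ phat x y) (θ : Θ) :
    ∑ x : Fin n → B, prodP p n θ x * ∑ y, p θ y * (p θ y / phat x y) ^ (α - 1)
      = ∑ x : Fin n → B, ∑ y, Ef α p n θ x y * phat x y ^ (1 - α) := by
  refine Finset.sum_congr rfl fun x _ => ?_
  rw [Finset.mul_sum]
  refine Finset.sum_congr rfl fun y _ => ?_
  rw [term_q hα ((hp θ).1 y) (hφ x y)]
  unfold Ef; ring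

theorem inner_scaled (hα : 1 < α) (hp : ∀ θ, IsPMF (p θ)) (θ : Θ) {c : ℝ} (hc : 0 ≤ c)
    (x : Fin n → B) :
    (∑ y, (c * Ef α p n θ x y) ^ α⁻¹) ^ α = c * prodP p n θ x := by
  have hα0 : (0:ℝ) < α := by linarith
  have h : ∀ y : B, (c * Ef α p n θ x y) ^ α⁻¹
      = (c * prodP p n θ x) ^ α⁻¹ * p θ y := fun y => by
    unfold Ef
    rw [← mul_assoc,
      Real.mul_rpow (mul_nonneg hc (prodP_nonneg hp θ x)) (Real.rpow_nonneg ((hp θ).1 y) α),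
      Real.rpow_rpow_inv ((hp θ).1 y) (ne_of_gt hα0)]
  rw [Finset.sum_congr rfl fun y _ => h y, ← Finset.mul_sum, (hp θ).2, mul_one,
    Real.rpow_inv_rpow (mul_nonneg hc (prodP_nonneg hp θ x)) (ne_of_gt hα0)]

theorem Af_dirac (hα0 : 0 ≤ α) (hmeas : ∀ z : B, Measurable fun θ => p θ z)
    (θ : Θ) (x : Fin n → B) (y : B) :
    Af α p n (Measure.dirac θ) x y = Ef α p n θ x y :=
  integral_dirac' _ θ ((measurable_Ef hα0 hmeas x y).stronglyMeasurable)

theorem fC_dirac (hα : 1 < α) (hp : ∀ θ, IsPMF (p θ))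
    (hmeas : ∀ z : B, Measurable fun θ => p θ z) (θ : Θ) :
    fC α p n (Measure.dirac θ) (B := B) = 1 := by
  unfold fC Bt
  have h : ∀ x : Fin n → B,
      (∑ y, Af α p n (Measure.dirac θ) x y ^ α⁻¹) ^ α = prodP p n θ x := fun x => by
    have h2 : ∀ y : B, Af α p n (Measure.dirac θ) x y = 1 * Ef α p n θ x y := fun y => by
      rw [one_mul]; exact Af_dirac (by linarith) hmeas θ x y
    rw [Finset.sum_congr rfl fun y _ => by rw [h2 y]]
    have := inner_scaled hα hp θ zero_le_one x
    rw [this, one_mul]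
  rw [Finset.sum_congr rfl fun x _ => h x, sum_prodP hp n θ]

theorem fC_pos [Nonempty B] [IsProbabilityMeasure w] (hα : 1 < α) (hp : ∀ θ, IsPMF (p θ))
    (hmeas : ∀ z : B, Measurable fun θ => p θ z) :
    0 < fC α p n w := by
  have hα0 : (0:ℝ) < α := by linarith
  have hcard : (0:ℝ) < (Fintype.card B : ℝ) := by exact_mod_cast Fintype.card_pos
  have hpt : ∀ θ, ((Fintype.card B : ℝ))⁻¹ ^ α ≤ ∑ y, p θ y ^ α := by
    intro θ
    obtain ⟨y, -, hy⟩ : ∃ y ∈ Finset.univ, ((Fintype.card B : ℝ))⁻¹ ≤ p θ y := by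
      apply Finset.exists_le_of_sum_le Finset.univ_nonempty
      rw [(hp θ).2, Finset.sum_const, Finset.card_univ, nsmul_eq_mul,
        mul_inv_cancel₀ (ne_of_gt hcard)]
    calc ((Fintype.card B : ℝ))⁻¹ ^ α ≤ p θ y ^ α :=
          Real.rpow_le_rpow (by positivity) hy hα0.le
    _ ≤ ∑ y', p θ y' ^ α :=
          Finset.single_le_sum (fun y' _ => Real.rpow_nonneg ((hp θ).1 y') α)
            (Finset.mem_univ y)
  have hint : ∀ y : B, Integrable (fun θ => p θ y ^ α) w := fun y =>
    integrable_of_bound ((Real.continuous_rpow_const hα0.le).measurable.comp (hmeas y))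
      (fun θ => Real.rpow_nonneg ((hp θ).1 y) α)
      (fun θ => Real.rpow_le_one ((hp θ).1 y) ((hp θ).le_one y) hα0.le)
  have h1 : ((Fintype.card B:ℝ))⁻¹ ^ α ≤ ∑ y, ∫ θ, p θ y ^ α ∂w := by
    rw [← integral_finset_sum _ fun y _ => hint y]
    have h1' := integral_mono (μ := w) (integrable_const (((Fintype.card B:ℝ))⁻¹ ^ α))
      (integrable_finset_sum _ fun y _ => hint y) hpt
    simpa using h1'
  have h2 : ∀ y : B, (∫ θ, p θ y ^ α ∂w) = ∑ x : Fin n → B, Af α p n w x y := fun y => by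
    have hsum := integral_finset_sum (μ := w) Finset.univ
      (fun (x : Fin n → B) _ => integrable_Ef hα0.le hp hmeas x y)
    rw [show (∑ x : Fin n → B, Af α p n w x y)
        = ∑ x : Fin n → B, ∫ θ, Ef α p n θ x y ∂w from rfl, ← hsum]
    congr 1; funext θ
    unfold Ef
    rw [← Finset.sum_mul, sum_prodP hp n θ, one_mul]
  have h3 : 0 < ∑ y, ∑ x : Fin n → B, Af α p n w x y := by
    calc (0:ℝ) < ((Fintype.card B:ℝ))⁻¹ ^ α := by positivity
    _ ≤ _ := h1.trans_eq (Finset.sum_congr rfl fun y _ => h2 y)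
  obtain ⟨y, -, hy⟩ := Finset.exists_lt_of_sum_lt (f := fun _ => (0:ℝ)) (by simpa using h3)
  obtain ⟨x, -, hx⟩ := Finset.exists_lt_of_sum_lt (f := fun _ => (0:ℝ)) (by simpa using hy)
  calc (0:ℝ) < Af α p n w x y := hx
  _ = (Af α p n w x y ^ α⁻¹) ^ α :=
        (Real.rpow_inv_rpow (Af_nonneg hp x y) (ne_of_gt hα0)).symm
  _ ≤ Bt α p n w x ^ α :=
        Real.rpow_le_rpow (Real.rpow_nonneg (Af_nonneg hp x y) _) (rpow_Af_le_Bt hp x y) hα0.le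
  _ ≤ fC α p n w :=
        Finset.single_le_sum (fun x' _ => Real.rpow_nonneg (Bt_nonneg hp x') α)
          (Finset.mem_univ x)

/-! ### mixture measures -/

noncomputable def mixM (t : ℝ) (w : Measure Θ) (θ : Θ) : Measure Θ :=
  ENNReal.ofReal (1 - t) • w + ENNReal.ofReal t • Measure.dirac θ

theorem mixM_prob [IsProbabilityMeasure w] {t : ℝ} (h0 : 0 ≤ t) (h1 : t ≤ 1) (θ : Θ) :
    IsProbabilityMeasure (mixM t w θ) := by
  constructor
  rw [mixM, Measure.add_apply, Measure.smul_apply, Measure.smul_apply, measure_univ,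
    measure_univ, smul_eq_mul, smul_eq_mul, mul_one, mul_one,
    ← ENNReal.ofReal_add (by linarith) h0]
  norm_num

theorem Af_mixM [IsProbabilityMeasure w] (hα : 1 < α) (hp : ∀ θ, IsPMF (p θ))
    (hmeas : ∀ z : B, Measurable fun θ => p θ z) {t : ℝ} (h0 : 0 ≤ t) (h1 : t ≤ 1)
    (θ : Θ) (x : Fin n → B) (y : B) :
    Af α p n (mixM t w θ) x y = (1 - t) * Af α p n w x y + t * Ef α p n θ x y := by
  have hα0 : (0:ℝ) ≤ α := by linarith
  have hiw : Integrable (fun θ' => Ef α p n θ' x y) w := integrable_Ef hα0 hp hmeas x y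
  have hid : Integrable (fun θ' => Ef α p n θ' x y) (Measure.dirac θ) :=
    integrable_Ef hα0 hp hmeas x y
  show (∫ θ', Ef α p n θ' x y ∂(mixM t w θ)) = _
  unfold mixM
  rw [integral_add_measure (hiw.smul_measure ENNReal.ofReal_ne_top)
      (hid.smul_measure ENNReal.ofReal_ne_top),
    integral_smul_measure, integral_smul_measure,
    integral_dirac' _ θ ((measurable_Ef hα0 hmeas x y).stronglyMeasurable),
    ENNReal.toReal_ofReal (by linarith : (0:ℝ) ≤ 1 - t), ENNReal.toReal_ofReal h0]
  simp only [smul_eq_mul]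
  rfl

/-! ### the key variational inequality -/

theorem key_ineq [Nonempty B] [IsProbabilityMeasure w] (hα : 1 < α) (hp : ∀ θ, IsPMF (p θ))
    (hmeas : ∀ z : B, Measurable fun θ => p θ z)
    (hopt : ∀ v : Measure Θ, IsProbabilityMeasure v →
      (α - 1)⁻¹ * Real.log (fC α p n v (B := B)) ≤ (α - 1)⁻¹ * Real.log (fC α p n w))
    (θ : Θ) :
    ∑ x : Fin n → B, ∑ y,
        Bt α p n w x ^ (α - 1) * (Af α p n w x y ^ (α⁻¹ - 1) * Ef α p n θ x y)
      ≤ fC α p n w := by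
  have hα0 : (0:ℝ) < α := by linarith
  have hα1 : (0:ℝ) < α - 1 := by linarith
  have hainv : (0:ℝ) < α⁻¹ := by positivity
  have hainv1 : α⁻¹ ≤ 1 := by nlinarith [mul_inv_cancel₀ (ne_of_gt hα0), inv_pos.2 hα0]
  have hinv1 : α⁻¹ < 1 := by nlinarith [mul_inv_cancel₀ (ne_of_gt hα0), inv_pos.2 hα0]
  have hexpne : α⁻¹ - 1 ≤ 0 := by linarith
  have hinvne : α⁻¹ - 1 ≠ 0 := by intro hh; nlinarith
  have hF0 : 0 < fC α p n w := fC_pos hα hp hmeas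
  have hA0 : ∀ (x : Fin n → B) (y : B), 0 ≤ Af α p n w x y := fun x y => Af_nonneg hp x y
  have hE0 : ∀ (x : Fin n → B) (y : B), 0 ≤ Ef α p n θ x y := fun x y => Ef_nonneg hp θ x y
  have hB0 : ∀ x : Fin n → B, 0 ≤ Bt α p n w x := fun x => Bt_nonneg hp x
  -- Step 2 : directional-derivative inequality at the optimum, for each t ∈ (0,1)
  have main : ∀ t : ℝ, t ∈ Set.Ioo (0:ℝ) 1 →
      (∑ x : Fin n → B, ∑ y, Bt α p n w x ^ (α - 1) *
          (((1 - t) * Af α p n w x y + t * Ef α p n θ x y) ^ (α⁻¹ - 1) * Ef α p n θ x y))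
        ≤ ∑ x : Fin n → B, ∑ y, Bt α p n w x ^ (α - 1) *
          (((1 - t) * Af α p n w x y + t * Ef α p n θ x y) ^ (α⁻¹ - 1) * Af α p n w x y) := by
    intro t ht
    obtain ⟨ht0, ht1⟩ := ht
    have ht1' : (0:ℝ) < 1 - t := by linarith
    set u : (Fin n → B) → B → ℝ :=
      fun x y => (1 - t) * Af α p n w x y + t * Ef α p n θ x y with hu
    have hu0 : ∀ (x : Fin n → B) (y : B), 0 ≤ u x y := fun x y =>
      add_nonneg (mul_nonneg ht1'.le (hA0 x y)) (mul_nonneg ht0.le (hE0 x y))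
    haveI hinst : IsProbabilityMeasure (mixM t w θ) := mixM_prob ht0.le ht1.le θ
    have hAfmix : ∀ (x : Fin n → B) (y : B), Af α p n (mixM t w θ) x y = u x y := fun x y =>
      Af_mixM hα hp hmeas ht0.le ht1.le θ x y
    have hBtmix : ∀ x : Fin n → B, Bt α p n (mixM t w θ) x = ∑ y, u x y ^ α⁻¹ := fun x =>
      Finset.sum_congr rfl fun y _ => by rw [hAfmix x y]
    have hfCmix : fC α p n (mixM t w θ) = ∑ x : Fin n → B, (∑ y, u x y ^ α⁻¹) ^ α :=
      Finset.sum_congr rfl fun x _ => by rw [hBtmix x]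
    -- positivity of the mixture functional
    have hmix_ge : t ≤ fC α p n (mixM t w θ) := by
      rw [hfCmix]
      have hx : ∀ x : Fin n → B, t * prodP p n θ x ≤ (∑ y, u x y ^ α⁻¹) ^ α := by
        intro x
        rw [← inner_scaled hα hp θ ht0.le x]
        refine Real.rpow_le_rpow
          (Finset.sum_nonneg fun y _ => Real.rpow_nonneg (mul_nonneg ht0.le (hE0 x y)) _)
          (Finset.sum_le_sum fun y _ => Real.rpow_le_rpow
            (mul_nonneg ht0.le (hE0 x y)) ?_ hainv.le) hα0.le
        have h9 := mul_nonneg ht1'.le (hA0 x y)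
        simp only [hu]
        linarith
      calc t = ∑ x : Fin n → B, t * prodP p n θ x := by
            rw [← Finset.mul_sum, sum_prodP hp n θ, mul_one]
      _ ≤ _ := Finset.sum_le_sum fun x _ => hx x
    have hmix_pos : 0 < fC α p n (mixM t w θ) := lt_of_lt_of_le ht0 hmix_ge
    -- the optimality inequality
    have hle : fC α p n (mixM t w θ) ≤ fC α p n w := by
      have h := hopt (mixM t w θ) hinst
      have hlog : Real.log (fC α p n (mixM t w θ)) ≤ Real.log (fC α p n w) := by
        have h7 := mul_le_mul_of_nonneg_left h (le_of_lt hα1)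
        rw [← mul_assoc, ← mul_assoc, mul_inv_cancel₀ (ne_of_gt hα1), one_mul, one_mul] at h7
        exact h7
      calc fC α p n (mixM t w θ) = Real.exp (Real.log (fC α p n (mixM t w θ))) :=
            (Real.exp_log hmix_pos).symm
      _ ≤ Real.exp (Real.log (fC α p n w)) := Real.exp_le_exp.2 hlog
      _ = fC α p n w := Real.exp_log hF0
    -- per-x tangent estimate
    have hxineq : ∀ x : Fin n → B,
        Bt α p n w x ^ α + (α * Bt α p n w x ^ (α - 1)) *
            (α⁻¹ * ∑ y, u x y ^ (α⁻¹ - 1) * (u x y - Af α p n w x y))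
          ≤ (∑ y, u x y ^ α⁻¹) ^ α := by
      intro x
      have hsum0 : 0 ≤ ∑ y, u x y ^ α⁻¹ :=
        Finset.sum_nonneg fun y _ => Real.rpow_nonneg (hu0 x y) _
      have htc := tangent_convex hα (hB0 x) hsum0
      have hin : Bt α p n w x + α⁻¹ * ∑ y, u x y ^ (α⁻¹ - 1) * (u x y - Af α p n w x y)
          ≤ ∑ y, u x y ^ α⁻¹ := by
        have hpt : ∀ y : B, Af α p n w x y ^ α⁻¹ +
            α⁻¹ * (u x y ^ (α⁻¹ - 1) * (u x y - Af α p n w x y)) ≤ u x y ^ α⁻¹ := by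
          intro y
          rcases eq_or_lt_of_le (hu0 x y) with h | h
          · have hAz : Af α p n w x y = 0 := by
              have h1 := mul_nonneg ht1'.le (hA0 x y)
              have h2 := mul_nonneg ht0.le (hE0 x y)
              have h3 : (1 - t) * Af α p n w x y = 0 := by
                simp only [hu] at h; linarith
              rcases mul_eq_zero.1 h3 with h' | h'
              · exact absurd h' (ne_of_gt ht1')
              · exact h'
            rw [← h, hAz, Real.zero_rpow (ne_of_gt hainv), Real.zero_rpow hinvne]
            norm_num
          · have h8 := tangent_concave hainv hainv1 (hA0 x y) h
            linarith
        calc Bt α p n w x + α⁻¹ * ∑ y, u x y ^ (α⁻¹ - 1) * (u x y - Af α p n w x y)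
            = ∑ y, (Af α p n w x y ^ α⁻¹ +
                α⁻¹ * (u x y ^ (α⁻¹ - 1) * (u x y - Af α p n w x y))) := by
              rw [Finset.sum_add_distrib, ← Finset.mul_sum]
              rfl
        _ ≤ ∑ y, u x y ^ α⁻¹ := Finset.sum_le_sum fun y _ => hpt y
      have hc0 : 0 ≤ α * Bt α p n w x ^ (α - 1) :=
        mul_nonneg hα0.le (Real.rpow_nonneg (hB0 x) _)
      have hassoc : α * (Bt α p n w x ^ (α-1) * ((∑ y, u x y ^ α⁻¹) - Bt α p n w x))
          = (α * Bt α p n w x ^ (α-1)) * ((∑ y, u x y ^ α⁻¹) - Bt α p n w x) := by ring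
      rw [hassoc] at htc
      have h5 := mul_le_mul_of_nonneg_left
        (show α⁻¹ * ∑ y, u x y ^ (α⁻¹ - 1) * (u x y - Af α p n w x y)
            ≤ (∑ y, u x y ^ α⁻¹) - Bt α p n w x from by linarith) hc0
      linarith
    -- sum the per-x estimates
    have hsumineq : fC α p n w + ∑ x : Fin n → B, Bt α p n w x ^ (α - 1) *
        ∑ y, u x y ^ (α⁻¹ - 1) * (u x y - Af α p n w x y) ≤ fC α p n (mixM t w θ) := by
      calc fC α p n w + ∑ x : Fin n → B, Bt α p n w x ^ (α - 1) *
            ∑ y, u x y ^ (α⁻¹ - 1) * (u x y - Af α p n w x y)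
          = ∑ x : Fin n → B, (Bt α p n w x ^ α + (α * Bt α p n w x ^ (α - 1)) *
              (α⁻¹ * ∑ y, u x y ^ (α⁻¹ - 1) * (u x y - Af α p n w x y))) := by
            rw [Finset.sum_add_distrib]
            congr 1
            refine Finset.sum_congr rfl fun x _ => ?_
            rw [mul_mul_mul_comm, mul_inv_cancel₀ (ne_of_gt hα0), one_mul]
      _ ≤ ∑ x : Fin n → B, (∑ y, u x y ^ α⁻¹) ^ α := Finset.sum_le_sum fun x _ => hxineq x
      _ = fC α p n (mixM t w θ) := hfCmix.symm
    have hS1 : ∑ x : Fin n → B, Bt α p n w x ^ (α - 1) *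
        ∑ y, u x y ^ (α⁻¹ - 1) * (u x y - Af α p n w x y) ≤ 0 := by linarith
    have hfac : ∑ x : Fin n → B, Bt α p n w x ^ (α - 1) *
          ∑ y, u x y ^ (α⁻¹ - 1) * (u x y - Af α p n w x y)
        = t * (∑ x : Fin n → B, ∑ y, Bt α p n w x ^ (α - 1) *
              (u x y ^ (α⁻¹ - 1) * Ef α p n θ x y))
          - t * (∑ x : Fin n → B, ∑ y, Bt α p n w x ^ (α - 1) *
              (u x y ^ (α⁻¹ - 1) * Af α p n w x y)) := by
      rw [Finset.mul_sum, Finset.mul_sum, ← Finset.sum_sub_distrib]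
      refine Finset.sum_congr rfl fun x _ => ?_
      rw [Finset.mul_sum, Finset.mul_sum, Finset.mul_sum, ← Finset.sum_sub_distrib]
      refine Finset.sum_congr rfl fun y _ => ?_
      simp only [hu]
      ring
    rw [hfac] at hS1
    by_contra hcon
    push_neg at hcon
    nlinarith
  -- Step 3 : take the limit t → 0⁺
  set G : ℝ → ℝ := fun t => ∑ x : Fin n → B, ∑ y, Bt α p n w x ^ (α - 1) *
      ((if 0 < Af α p n w x y then (Af α p n w x y + t * Ef α p n θ x y) ^ (α⁻¹ - 1) else 0)
        * Ef α p n θ x y) with hG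
  have hGle : ∀ t ∈ Set.Ioo (0:ℝ) 1, G t ≤ (1 - t) ^ (α⁻¹ - 1) * fC α p n w := by
    intro t ht
    obtain ⟨ht0, ht1⟩ := ht
    have ht1' : (0:ℝ) < 1 - t := by linarith
    have h1 : G t ≤ ∑ x : Fin n → B, ∑ y, Bt α p n w x ^ (α - 1) *
        (((1 - t) * Af α p n w x y + t * Ef α p n θ x y) ^ (α⁻¹ - 1) * Ef α p n θ x y) := by
      simp only [hG]
      refine Finset.sum_le_sum fun x _ => Finset.sum_le_sum fun y _ => ?_
      by_cases h : 0 < Af α p n w x y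
      · rw [if_pos h]
        refine mul_le_mul_of_nonneg_left
          (mul_le_mul_of_nonneg_right ?_ (hE0 x y)) (Real.rpow_nonneg (hB0 x) _)
        refine Real.rpow_le_rpow_of_nonpos ?_ ?_ hexpne
        · exact lt_of_lt_of_le (mul_pos ht1' h)
            (le_add_of_nonneg_right (mul_nonneg ht0.le (hE0 x y)))
        · have := mul_nonneg ht0.le (hA0 x y)
          nlinarith
      · rw [if_neg h]
        have h9 : 0 ≤ Bt α p n w x ^ (α - 1) *
            (((1 - t) * Af α p n w x y + t * Ef α p n θ x y) ^ (α⁻¹ - 1) * Ef α p n θ x y) :=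
          mul_nonneg (Real.rpow_nonneg (hB0 x) _)
            (mul_nonneg (Real.rpow_nonneg (add_nonneg (mul_nonneg ht1'.le (hA0 x y))
              (mul_nonneg ht0.le (hE0 x y))) _) (hE0 x y))
        simpa using h9
    have h2 := main t ⟨ht0, ht1⟩
    have h3 : ∑ x : Fin n → B, ∑ y, Bt α p n w x ^ (α - 1) *
        (((1 - t) * Af α p n w x y + t * Ef α p n θ x y) ^ (α⁻¹ - 1) * Af α p n w x y)
        ≤ (1 - t) ^ (α⁻¹ - 1) * fC α p n w := by
      rw [show fC α p n w = ∑ x : Fin n → B, Bt α p n w x ^ α from rfl, Finset.mul_sum]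
      refine Finset.sum_le_sum fun x _ => ?_
      rcases eq_or_lt_of_le (hB0 x) with hB | hB
      · have hAz : ∀ y : B, Af α p n w x y = 0 := by
          intro y
          have hle1 := rpow_Af_le_Bt hp x y (α := α) (w := w)
          rw [← hB] at hle1
          have h3' : Af α p n w x y ^ α⁻¹ = 0 :=
            le_antisymm hle1 (Real.rpow_nonneg (hA0 x y) _)
          exact ((Real.rpow_eq_zero_iff_of_nonneg (hA0 x y)).1 h3').1
        simp only [hAz, mul_zero, Finset.sum_const_zero]
        positivity
      · have hyle : ∀ y : B,
            ((1 - t) * Af α p n w x y + t * Ef α p n θ x y) ^ (α⁻¹ - 1) * Af α p n w x y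
              ≤ (1 - t) ^ (α⁻¹ - 1) * Af α p n w x y ^ α⁻¹ := by
          intro y
          rcases eq_or_lt_of_le (hA0 x y) with hA | hA
          · rw [← hA, Real.zero_rpow (ne_of_gt hainv), mul_zero, mul_zero]
          · have hupos : 0 < (1 - t) * Af α p n w x y + t * Ef α p n θ x y :=
              lt_of_lt_of_le (mul_pos ht1' hA)
                (le_add_of_nonneg_right (mul_nonneg ht0.le (hE0 x y)))
            have hh1 : ((1 - t) * Af α p n w x y + t * Ef α p n θ x y) ^ (α⁻¹ - 1)
                ≤ ((1 - t) * Af α p n w x y) ^ (α⁻¹ - 1) :=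
              Real.rpow_le_rpow_of_nonpos (mul_pos ht1' hA)
                (le_add_of_nonneg_right (mul_nonneg ht0.le (hE0 x y))) hexpne
            have hh2 : ((1 - t) * Af α p n w x y) ^ (α⁻¹ - 1)
                = (1 - t) ^ (α⁻¹ - 1) * Af α p n w x y ^ (α⁻¹ - 1) :=
              Real.mul_rpow ht1'.le (hA0 x y)
            calc ((1 - t) * Af α p n w x y + t * Ef α p n θ x y) ^ (α⁻¹ - 1) * Af α p n w x y
                ≤ ((1 - t) ^ (α⁻¹ - 1) * Af α p n w x y ^ (α⁻¹ - 1)) * Af α p n w x y :=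
                  mul_le_mul_of_nonneg_right (hh2 ▸ hh1) (hA0 x y)
            _ = (1 - t) ^ (α⁻¹ - 1) * Af α p n w x y ^ α⁻¹ := by
                  rw [mul_assoc, Real.rpow_sub_one hA.ne', div_mul_cancel₀ _ hA.ne']
        calc ∑ y, Bt α p n w x ^ (α - 1) *
              (((1 - t) * Af α p n w x y + t * Ef α p n θ x y) ^ (α⁻¹ - 1) * Af α p n w x y)
            ≤ ∑ y, Bt α p n w x ^ (α - 1) *
              ((1 - t) ^ (α⁻¹ - 1) * Af α p n w x y ^ α⁻¹) :=
              Finset.sum_le_sum fun y _ =>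
                mul_le_mul_of_nonneg_left (hyle y) (Real.rpow_nonneg (hB0 x) _)
        _ = (1 - t) ^ (α⁻¹ - 1) * Bt α p n w x ^ α := by
              rw [Finset.sum_congr rfl fun y (_ : y ∈ Finset.univ) =>
                show Bt α p n w x ^ (α - 1) * ((1 - t) ^ (α⁻¹ - 1) * Af α p n w x y ^ α⁻¹)
                  = (1 - t) ^ (α⁻¹ - 1) * (Bt α p n w x ^ (α - 1) * Af α p n w x y ^ α⁻¹)
                from by ring, ← Finset.mul_sum, ← Finset.mul_sum]
              congr 1
              rw [show (∑ y, Af α p n w x y ^ α⁻¹) = Bt α p n w x from rfl,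
                Real.rpow_sub_one (ne_of_gt hB), div_mul_cancel₀ _ (ne_of_gt hB)]
    linarith
  have hGtend : Tendsto G (𝓝[>] (0:ℝ)) (𝓝 (G 0)) := by
    simp only [hG]
    refine tendsto_finset_sum _ fun x _ => tendsto_finset_sum _ fun y _ => ?_
    by_cases h : 0 < Af α p n w x y
    · simp only [if_pos h]
      have hb : Tendsto (fun s : ℝ => Af α p n w x y + s * Ef α p n θ x y) (𝓝[>] 0)
          (𝓝 (Af α p n w x y + 0 * Ef α p n θ x y)) := by
        apply Tendsto.mono_left _ nhdsWithin_le_nhds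
        exact (continuous_const.add (continuous_id.mul continuous_const)).tendsto 0
      have hb2 := hb.rpow_const (p := α⁻¹ - 1) (Or.inl (by simpa using h.ne'))
      exact ((hb2.mul_const _).const_mul _)
    · simp only [if_neg h]
      exact tendsto_const_nhds
  have hHtend : Tendsto (fun t : ℝ => (1 - t) ^ (α⁻¹ - 1) * fC α p n w) (𝓝[>] (0:ℝ))
      (𝓝 (fC α p n w)) := by
    have hb : Tendsto (fun t : ℝ => 1 - t) (𝓝 0) (𝓝 1) := by
      exact (continuous_const.sub continuous_id').tendsto' (0:ℝ) 1 (by simp)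
    have h2 := (hb.rpow_const (p := α⁻¹ - 1) (Or.inl one_ne_zero)).mul_const (fC α p n w)
    rw [Real.one_rpow, one_mul] at h2
    exact h2.mono_left nhdsWithin_le_nhds
  have hG0 : G 0 ≤ fC α p n w := by
    refine le_of_tendsto_of_tendsto hGtend hHtend ?_
    filter_upwards [Ioo_mem_nhdsGT_of_mem (Set.left_mem_Ico.2 zero_lt_one)] with t ht
    exact hGle t ht
  have hmain0 : (∑ x : Fin n → B, ∑ y,
      Bt α p n w x ^ (α - 1) * (Af α p n w x y ^ (α⁻¹ - 1) * Ef α p n θ x y)) = G 0 := by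
    simp only [hG]
    refine Finset.sum_congr rfl fun x _ => Finset.sum_congr rfl fun y _ => ?_
    by_cases h : 0 < Af α p n w x y
    · rw [if_pos h]
      norm_num
    · rw [if_neg h, le_antisymm (not_lt.1 h) (hA0 x y), Real.zero_rpow hinvne]
  rw [hmain0]
  exact hG0

end RCproof

namespace RCproof

theorem sibson_fC {Θ B : Type*} [MeasurableSpace Θ] [Fintype B] (α : ℝ) (p : Θ → B → ℝ)
    (n : ℕ) (w : Measure Θ) :
    sibsonMI α p n w = (α - 1)⁻¹ * Real.log (fC α p n w) := rfl

end RCproof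

/-- **Conditional regret-capacity theorem for the `α`-regret.**
For `α > 1`, if a prior probability measure `w*` attains `sup_w I_α^w(θ,Y|X^n)`, then the
minimax batch `α`-regret equals `I_α^{w*}(θ,Y|X^n)` and is achieved by the conditional
`α`-NML predictor `p̂*_α` of `w*`:
(i) `R_α(p̂*_α,θ) ≤ I_α^{w*}` for all `θ` (so `sup_θ R_α(p̂*_α,θ) ≤ I_α^{w*}`), and
(ii) for every (everywhere positive) batch predictor `p̂`, any upper bound `C` of
`θ ↦ R_α(p̂,θ)` satisfies `C ≥ I_α^{w*}` (so `sup_θ R_α(p̂,θ) ≥ I_α^{w*}`). -/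
theorem conditional_regret_capacity_alpha
    {𝒳 Θ : Type*} [Fintype 𝒳] [Nonempty 𝒳] [MeasurableSpace Θ]
    (ℓ n : ℕ) (hℓ : 0 < ℓ) (hn : 0 < n) (α : ℝ) (hα : 1 < α)
    (p : Θ → (Fin ℓ → 𝒳) → ℝ)
    (hp : ∀ θ, IsPMF (p θ))
    (hmeas : ∀ z : Fin ℓ → 𝒳, Measurable fun θ => p θ z)
    (wstar : Measure Θ) [IsProbabilityMeasure wstar]
    (hopt : ∀ w : Measure Θ, IsProbabilityMeasure w →
      sibsonMI α p n w ≤ sibsonMI α p n wstar) :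
    (∀ θ : Θ, alphaRegret α p n (alphaNML α p n wstar) θ ≤ sibsonMI α p n wstar)
    ∧ (∀ phat : (Fin n → Fin ℓ → 𝒳) → (Fin ℓ → 𝒳) → ℝ,
        (∀ x, IsPMF (phat x)) → (∀ x y, 0 < phat x y) →
        ∀ C : ℝ, (∀ θ : Θ, alphaRegret α p n phat θ ≤ C) →
          sibsonMI α p n wstar ≤ C) := by
  classical
  have hα1 : (0:ℝ) < α - 1 := by linarith
  have hopt' : ∀ v : Measure Θ, IsProbabilityMeasure v →
      (α - 1)⁻¹ * Real.log (RCproof.fC α p n v) ≤ (α - 1)⁻¹ * Real.log (RCproof.fC α p n wstar) := by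
    intro v hv
    have h := hopt v hv
    rw [RCproof.sibson_fC, RCproof.sibson_fC] at h
    exact h
  have hF0 : 0 < RCproof.fC α p n wstar := RCproof.fC_pos hα hp hmeas
  constructor
  · -- part (i)
    intro θ
    have hone : 1 ≤ RCproof.fC α p n wstar := by
      have h := hopt (Measure.dirac θ) inferInstance
      rw [RCproof.sibson_fC, RCproof.sibson_fC, RCproof.fC_dirac hα hp hmeas θ,
        Real.log_one, mul_zero] at h
      have hlog : 0 ≤ Real.log (RCproof.fC α p n wstar) := by
        by_contra hneg
        push_neg at hneg
        nlinarith [mul_pos (inv_pos.2 hα1) (neg_pos.2 hneg)]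
      calc (1:ℝ) = Real.exp 0 := Real.exp_zero.symm
      _ ≤ Real.exp (Real.log (RCproof.fC α p n wstar)) := Real.exp_le_exp.2 hlog
      _ = _ := Real.exp_log hF0
    have hnn : ∀ (x : Fin n → Fin ℓ → 𝒳) (y : Fin ℓ → 𝒳), 0 ≤ alphaNML α p n wstar x y :=
      fun x y => RCproof.alphaNML_nonneg hα hp hmeas x y
    have harg := RCproof.regret_arg_eq hα hp hnn θ
    have hkey := RCproof.key_ineq hα hp hmeas hopt' θ
    have hiden : (∑ x : Fin n → Fin ℓ → 𝒳, ∑ y : Fin ℓ → 𝒳,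
        RCproof.Ef α p n θ x y * alphaNML α p n wstar x y ^ (1 - α))
        = ∑ x : Fin n → Fin ℓ → 𝒳, ∑ y : Fin ℓ → 𝒳, RCproof.Bt α p n wstar x ^ (α - 1) *
            (RCproof.Af α p n wstar x y ^ (α⁻¹ - 1) * RCproof.Ef α p n θ x y) := by
      refine Finset.sum_congr rfl fun x _ => Finset.sum_congr rfl fun y _ => ?_
      rw [RCproof.alphaNML_rpow hα hp hmeas x y]
      ring
    show (α - 1)⁻¹ * Real.log (∑ x : Fin n → Fin ℓ → 𝒳, prodP p n θ x *
        ∑ y : Fin ℓ → 𝒳, p θ y * (p θ y / alphaNML α p n wstar x y) ^ (α - 1))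
      ≤ sibsonMI α p n wstar
    rw [RCproof.sibson_fC, harg, hiden]
    refine mul_le_mul_of_nonneg_left ?_ (inv_nonneg.2 hα1.le)
    have hS0 : 0 ≤ ∑ x : Fin n → Fin ℓ → 𝒳, ∑ y : Fin ℓ → 𝒳,
        RCproof.Bt α p n wstar x ^ (α - 1) *
          (RCproof.Af α p n wstar x y ^ (α⁻¹ - 1) * RCproof.Ef α p n θ x y) :=
      Finset.sum_nonneg fun x _ => Finset.sum_nonneg fun y _ =>
        mul_nonneg (Real.rpow_nonneg (RCproof.Bt_nonneg hp x) _)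
          (mul_nonneg (Real.rpow_nonneg (RCproof.Af_nonneg hp x y) _)
            (RCproof.Ef_nonneg hp θ x y))
    rcases eq_or_lt_of_le hS0 with h | h
    · rw [← h, Real.log_zero]
      exact Real.log_nonneg hone
    · exact (Real.log_le_log_iff h hF0).2 hkey
  · -- part (ii)
    intro phat hpmf hpos C hC
    have harg : ∀ θ : Θ, (∑ x : Fin n → Fin ℓ → 𝒳, prodP p n θ x *
          ∑ y : Fin ℓ → 𝒳, p θ y * (p θ y / phat x y) ^ (α - 1))
        = ∑ x : Fin n → Fin ℓ → 𝒳, ∑ y : Fin ℓ → 𝒳,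
            RCproof.Ef α p n θ x y * phat x y ^ (1 - α) := fun θ =>
      RCproof.regret_arg_eq hα hp (fun x y => (hpos x y).le) θ
    have hTb : ∀ θ : Θ, (∑ x : Fin n → Fin ℓ → 𝒳, ∑ y : Fin ℓ → 𝒳,
        RCproof.Ef α p n θ x y * phat x y ^ (1 - α)) ≤ Real.exp ((α - 1) * C) := by
      intro θ
      have h := hC θ
      rw [show alphaRegret α p n phat θ = (α - 1)⁻¹ * Real.log
          (∑ x : Fin n → Fin ℓ → 𝒳, prodP p n θ x *
            ∑ y : Fin ℓ → 𝒳, p θ y * (p θ y / phat x y) ^ (α - 1)) from rfl, harg θ] at h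
      have hlog : Real.log (∑ x : Fin n → Fin ℓ → 𝒳, ∑ y : Fin ℓ → 𝒳,
          RCproof.Ef α p n θ x y * phat x y ^ (1 - α)) ≤ (α - 1) * C := by
        have h7 := mul_le_mul_of_nonneg_left h hα1.le
        rw [← mul_assoc, mul_inv_cancel₀ (ne_of_gt hα1), one_mul] at h7
        exact h7
      have hT0 : 0 ≤ ∑ x : Fin n → Fin ℓ → 𝒳, ∑ y : Fin ℓ → 𝒳,
          RCproof.Ef α p n θ x y * phat x y ^ (1 - α) :=
        Finset.sum_nonneg fun x _ => Finset.sum_nonneg fun y _ =>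
          mul_nonneg (RCproof.Ef_nonneg hp θ x y) (Real.rpow_nonneg (hpos x y).le _)
      rcases eq_or_lt_of_le hT0 with h8 | h8
      · rw [← h8]
        exact (Real.exp_pos _).le
      · calc (∑ x : Fin n → Fin ℓ → 𝒳, ∑ y : Fin ℓ → 𝒳,
            RCproof.Ef α p n θ x y * phat x y ^ (1 - α))
            = Real.exp (Real.log (∑ x : Fin n → Fin ℓ → 𝒳, ∑ y : Fin ℓ → 𝒳,
                RCproof.Ef α p n θ x y * phat x y ^ (1 - α))) := (Real.exp_log h8).symm
        _ ≤ Real.exp ((α - 1) * C) := Real.exp_le_exp.2 hlog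
    have hintxy : ∀ (x : Fin n → Fin ℓ → 𝒳) (y : Fin ℓ → 𝒳),
        Integrable (fun θ => RCproof.Ef α p n θ x y * phat x y ^ (1 - α)) wstar := fun x y =>
      (RCproof.integrable_Ef (by linarith) hp hmeas x y).mul_const _
    have hint : Integrable (fun θ => ∑ x : Fin n → Fin ℓ → 𝒳, ∑ y : Fin ℓ → 𝒳,
        RCproof.Ef α p n θ x y * phat x y ^ (1 - α)) wstar :=
      integrable_finset_sum _ fun x _ => integrable_finset_sum _ fun y _ => hintxy x y
    have hswap : (∫ θ, (∑ x : Fin n → Fin ℓ → 𝒳, ∑ y : Fin ℓ → 𝒳,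
          RCproof.Ef α p n θ x y * phat x y ^ (1 - α)) ∂wstar)
        = ∑ x : Fin n → Fin ℓ → 𝒳, ∑ y : Fin ℓ → 𝒳,
            RCproof.Af α p n wstar x y * phat x y ^ (1 - α) := by
      rw [integral_finset_sum _ fun x _ => integrable_finset_sum _ fun y _ => hintxy x y]
      refine Finset.sum_congr rfl fun x _ => ?_
      rw [integral_finset_sum _ fun y _ => hintxy x y]
      refine Finset.sum_congr rfl fun y _ => ?_
      rw [integral_mul_const]
      rfl
    have hrh : RCproof.fC α p n wstar ≤ ∑ x : Fin n → Fin ℓ → 𝒳, ∑ y : Fin ℓ → 𝒳,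
        RCproof.Af α p n wstar x y * phat x y ^ (1 - α) :=
      Finset.sum_le_sum fun x _ =>
        RCproof.rev_holder hα (fun y => RCproof.Af α p n wstar x y) (phat x)
          (fun y => RCproof.Af_nonneg hp x y) (hpos x) (hpmf x).2
    have hfinal : RCproof.fC α p n wstar ≤ Real.exp ((α - 1) * C) := by
      calc RCproof.fC α p n wstar
          ≤ ∑ x : Fin n → Fin ℓ → 𝒳, ∑ y : Fin ℓ → 𝒳,
              RCproof.Af α p n wstar x y * phat x y ^ (1 - α) := hrh
      _ = ∫ θ, (∑ x : Fin n → Fin ℓ → 𝒳, ∑ y : Fin ℓ → 𝒳,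
              RCproof.Ef α p n θ x y * phat x y ^ (1 - α)) ∂wstar := hswap.symm
      _ ≤ ∫ _θ, Real.exp ((α - 1) * C) ∂wstar :=
            integral_mono hint (integrable_const _) hTb
      _ = Real.exp ((α - 1) * C) := by simp
    rw [RCproof.sibson_fC]
    have hlog : Real.log (RCproof.fC α p n wstar) ≤ (α - 1) * C :=
      (Real.log_le_iff_le_exp hF0).2 hfinal
    calc (α - 1)⁻¹ * Real.log (RCproof.fC α p n wstar)
        ≤ (α - 1)⁻¹ * ((α - 1) * C) := mul_le_mul_of_nonneg_left hlog (inv_nonneg.2 hα1.le)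
    _ = C := by rw [← mul_assoc, inv_mul_cancel₀ (ne_of_gt hα1), one_mul]
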